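/- For Hermite polynomials He_n defined by He_n(x) = Σ_{i=0}^{⌊n/2⌋} (-1)^i n! x^{n-2i} / ((n-2i)! i! 2^i), the square admits the expansion (He_n(x))^2 = (n!)^2 Σ_{i=0}^{n} He_{2i}(x) / ((i!)^2 (n-i)!). -/

import Mathlib

open Finset

/-- Probabilists' Hermite polynomial, via its explicit sum formula. -/
noncomputable def He (n : ℕ) (x : ℝ) : ℝ :=
  ∑ i ∈ Finset.range (n / 2 + 1),
    (-1 : ℝ) ^ i * (Nat.factorial n : ℝ) * x ^ (n - 2 * i) /
      ((Nat.factorial (n - 2 * i) : ℝ) * (Nat.factorial i : ℝ) * 2 ^ i)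

noncomputable def Hg (n i : ℕ) : ℝ :=
  (-1 : ℝ) ^ i * (n.descFactorial (2 * i) : ℝ) / ((Nat.factorial i : ℝ) * 2 ^ i)

lemma Hg_zero (n : ℕ) : Hg n 0 = 1 := by simp [Hg]

lemma He_eq_sum (n M : ℕ) (h : n / 2 < M) (x : ℝ) :
    He n x = ∑ i ∈ Finset.range M, Hg n i * x ^ (n - 2 * i) := by
  have h1 : He n x = ∑ i ∈ Finset.range (n / 2 + 1), Hg n i * x ^ (n - 2 * i) := by
    refine Finset.sum_congr rfl fun i hi => ?_
    have h2 : 2 * i ≤ n := by have := Finset.mem_range.1 hi; omega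
    have hd : ((n - 2 * i).factorial : ℝ) * (n.descFactorial (2 * i) : ℝ) = (n.factorial : ℝ) := by
      exact_mod_cast congrArg (Nat.cast (R := ℝ)) (Nat.factorial_mul_descFactorial h2)
    have f1 : ((n - 2 * i).factorial : ℝ) ≠ 0 := Nat.cast_ne_zero.2 (Nat.factorial_ne_zero _)
    have f2 : (i.factorial : ℝ) ≠ 0 := Nat.cast_ne_zero.2 (Nat.factorial_ne_zero _)
    have f3 : (2 : ℝ) ^ i ≠ 0 := by positivity
    unfold Hg
    field_simp
    linear_combination (-(x ^ (n - 2 * i))) * hd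
  rw [h1]
  refine Finset.sum_subset (Finset.range_subset_range.2 (by omega)) fun i _ hni => ?_
  have hi2 : ¬ i < n / 2 + 1 := fun h' => hni (Finset.mem_range.2 h')
  have : n < 2 * i := by omega
  simp [Hg, Nat.descFactorial_eq_zero_iff_lt.2 this]

lemma Hg_rec (n i : ℕ) : Hg (n + 2) (i + 1) = Hg (n + 1) (i + 1) - (n + 1) * Hg n i := by
  have hN : (n + 2).descFactorial (2 * (i + 1))
      = (n + 1).descFactorial (2 * (i + 1)) + (n + 1) * (2 * i + 2) * n.descFactorial (2 * i) := by
    have e1 : 2 * (i + 1) = (2 * i + 1) + 1 := by ring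
    rw [e1, Nat.succ_descFactorial_succ, Nat.succ_descFactorial_succ,
      Nat.succ_descFactorial_succ, Nat.descFactorial_succ]
    by_cases h : 2 * i ≤ n
    · have e2 : n - 2 * i + (2 * i + 2) = n + 2 := by omega
      calc (n + 2) * ((n + 1) * n.descFactorial (2 * i))
          = (n + 1) * (n.descFactorial (2 * i) * ((n - 2 * i) + (2 * i + 2))) := by rw [e2]; ring
        _ = (n + 1) * ((n - 2 * i) * n.descFactorial (2 * i))
            + (n + 1) * (2 * i + 2) * n.descFactorial (2 * i) := by ring
    · have hz : n.descFactorial (2 * i) = 0 := Nat.descFactorial_eq_zero_iff_lt.2 (by omega)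
      simp [hz]
  have hD : ((n + 2).descFactorial (2 * (i + 1)) : ℝ)
      = ((n + 1).descFactorial (2 * (i + 1)) : ℝ)
        + ((n : ℝ) + 1) * (2 * (i : ℝ) + 2) * (n.descFactorial (2 * i) : ℝ) := by
    exact_mod_cast congrArg (Nat.cast (R := ℝ)) hN
  have f2 : (i.factorial : ℝ) ≠ 0 := Nat.cast_ne_zero.2 (Nat.factorial_ne_zero _)
  have f3 : (2 : ℝ) ^ i ≠ 0 := by positivity
  unfold Hg
  rw [hD, Nat.factorial_succ]
  push_cast
  field_simp
  ring

lemma He_zero' (x : ℝ) : He 0 x = 1 := by norm_num [He]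

lemma He_one' (x : ℝ) : He 1 x = x := by norm_num [He]

lemma He_rec (n : ℕ) (x : ℝ) : He (n + 2) x = x * He (n + 1) x - (n + 1) * He n x := by
  rw [He_eq_sum (n + 2) (n + 2) (by omega) x, He_eq_sum (n + 1) (n + 2) (by omega) x,
    He_eq_sum n (n + 1) (by omega) x]
  rw [Finset.sum_range_succ' (fun i => Hg (n + 2) i * x ^ (n + 2 - 2 * i)) (n + 1)]
  rw [Finset.sum_range_succ' (fun i => Hg (n + 1) i * x ^ (n + 1 - 2 * i)) (n + 1)]
  simp only [Hg_zero, one_mul, Nat.sub_zero, Nat.mul_zero]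
  have hx : x * x ^ (n + 1) = x ^ (n + 2) := (pow_succ' x (n + 1)).symm
  have main : ∑ i ∈ Finset.range (n + 1), Hg (n + 2) (i + 1) * x ^ (n + 2 - 2 * (i + 1))
      = ∑ i ∈ Finset.range (n + 1),
          (x * (Hg (n + 1) (i + 1) * x ^ (n + 1 - 2 * (i + 1)))
            - (n + 1) * (Hg n i * x ^ (n - 2 * i))) := by
    refine Finset.sum_congr rfl fun i _ => ?_
    rw [Hg_rec]
    have e1 : n + 2 - 2 * (i + 1) = n - 2 * i := by omega
    by_cases h : 2 * (i + 1) ≤ n + 1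
    · have e2 : n + 1 - 2 * (i + 1) + 1 = n - 2 * i := by omega
      have hx2 : x * x ^ (n + 1 - 2 * (i + 1)) = x ^ (n - 2 * i) := by
        rw [← e2, pow_succ]; ring
      rw [e1, show x * (Hg (n + 1) (i + 1) * x ^ (n + 1 - 2 * (i + 1)))
          = Hg (n + 1) (i + 1) * (x * x ^ (n + 1 - 2 * (i + 1))) from by ring, hx2]
      ring
    · have hz : Hg (n + 1) (i + 1) = 0 := by
        simp [Hg, Nat.descFactorial_eq_zero_iff_lt.2 (by omega : n + 1 < 2 * (i + 1))]
      rw [e1, hz]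
      ring
  rw [main, Finset.sum_sub_distrib, ← Finset.mul_sum, ← Finset.mul_sum, mul_add, hx]
  ring

lemma He_X_mul (e : ℕ) (x : ℝ) : x * He e x = He (e + 1) x + e * He (e - 1) x := by
  cases e with
  | zero => simp [He_zero', He_one']
  | succ t =>
    have h := He_rec t x
    simp only [Nat.add_sub_cancel]
    push_cast
    linarith [h]

noncomputable def Ac (m n k : ℕ) : ℝ := ((k.factorial * (m.choose k) * (n.choose k) : ℕ) : ℝ)

lemma Ac_zero (m n : ℕ) : Ac m n 0 = 1 := by simp [Ac]

lemma Ac_eq_zero_left {m k : ℕ} (n : ℕ) (h : m < k) : Ac m n k = 0 := by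
  simp [Ac, Nat.choose_eq_zero_of_lt h]

lemma Ac_eq_zero_right {n k : ℕ} (m : ℕ) (h : n < k) : Ac m n k = 0 := by
  simp [Ac, Nat.choose_eq_zero_of_lt h]

lemma He_key (m n k : ℕ) :
    Ac (m + 2) n (k + 1)
      = Ac (m + 1) n (k + 1) + Ac (m + 1) n k * ((m + 1 + n - 2 * k : ℕ) : ℝ)
        - ((m : ℝ) + 1) * Ac m n k := by
  by_cases h1 : k ≤ n
  · by_cases h2 : k ≤ m + 1
    · have habs : ((n.choose (k + 1) : ℝ)) * ((k : ℝ) + 1) = (n.choose k : ℝ) * ((n : ℝ) - k) := by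
        have hcast := congrArg (Nat.cast (R := ℝ)) (Nat.choose_succ_right_eq n k)
        push_cast [Nat.cast_sub h1] at hcast
        linarith [hcast]
      have habs2 : ((m.choose k : ℝ)) * ((m : ℝ) + 1)
          = ((m + 1).choose k : ℝ) * ((m : ℝ) + 1 - k) := by
        have hcast := congrArg (Nat.cast (R := ℝ)) (Nat.choose_mul_succ_eq m k)
        push_cast [Nat.cast_sub (by omega : k ≤ m + 1)] at hcast
        linarith [hcast]
      have hpas : (((m + 2).choose (k + 1) : ℕ) : ℝ)
          = ((m + 1).choose k : ℝ) + ((m + 1).choose (k + 1) : ℝ) := by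
        exact_mod_cast congrArg (Nat.cast (R := ℝ)) (Nat.choose_succ_succ (m + 1) k)
      have hsub : ((m + 1 + n - 2 * k : ℕ) : ℝ) = ((m : ℝ) + 1 - k) + ((n : ℝ) - k) := by
        push_cast [Nat.cast_sub (show 2 * k ≤ m + 1 + n by omega)]; ring
      unfold Ac
      push_cast [hpas, hsub, Nat.factorial_succ]
      linear_combination ((k.factorial : ℝ) * (((m + 1).choose k : ℕ) : ℝ)) * habs
        + ((k.factorial : ℝ) * ((n.choose k : ℕ) : ℝ)) * habs2
    · have c1 : Ac (m + 2) n (k + 1) = 0 := Ac_eq_zero_left n (by omega)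
      have c2 : Ac (m + 1) n (k + 1) = 0 := Ac_eq_zero_left n (by omega)
      have c3 : Ac (m + 1) n k = 0 := Ac_eq_zero_left n (by omega)
      have c4 : Ac m n k = 0 := Ac_eq_zero_left n (by omega)
      rw [c1, c2, c3, c4]; ring
  · have c1 : Ac (m + 2) n (k + 1) = 0 := Ac_eq_zero_right (m + 2) (by omega)
    have c2 : Ac (m + 1) n (k + 1) = 0 := Ac_eq_zero_right (m + 1) (by omega)
    have c3 : Ac (m + 1) n k = 0 := Ac_eq_zero_right (m + 1) (by omega)
    have c4 : Ac m n k = 0 := Ac_eq_zero_right m (by omega)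
    rw [c1, c2, c3, c4]; ring

lemma He_mul (x : ℝ) (m : ℕ) : ∀ n : ℕ, He m x * He n x
    = ∑ k ∈ Finset.range (m + 1), Ac m n k * He (m + n - 2 * k) x := by
  induction m using Nat.twoStepInduction with
  | zero =>
    intro n
    simp [He_zero', Ac]
  | one =>
    intro n
    rw [He_one', Finset.sum_range_succ, Finset.sum_range_succ, Finset.sum_range_zero]
    have e0 : 1 + n - 2 * 0 = n + 1 := by omega
    have e1 : 1 + n - 2 * 1 = n - 1 := by omega
    rw [e0, e1]
    have a0 : Ac 1 n 0 = 1 := Ac_zero 1 n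
    have a1 : Ac 1 n 1 = n := by simp [Ac, Nat.choose_one_right]
    rw [a0, a1, zero_add, one_mul]
    exact He_X_mul n x
  | more m ih ih1 =>
    intro n
    have hL : He (m + 2) x * He n x
        = x * (∑ k ∈ Finset.range (m + 2), Ac (m + 1) n k * He (m + 1 + n - 2 * k) x)
          - ((m : ℝ) + 1) * (∑ k ∈ Finset.range (m + 1), Ac m n k * He (m + n - 2 * k) x) := by
      rw [← ih1 n, ← ih n, He_rec m x]
      -- push_cast not needed
      ring
    rw [hL]
    have hL1 : x * (∑ k ∈ Finset.range (m + 2), Ac (m + 1) n k * He (m + 1 + n - 2 * k) x)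
        = ∑ k ∈ Finset.range (m + 2),
            (Ac (m + 1) n k * He (m + 1 + n - 2 * k + 1) x
              + Ac (m + 1) n k * ((m + 1 + n - 2 * k : ℕ) : ℝ) * He (m + 1 + n - 2 * k - 1) x) := by
      rw [Finset.mul_sum]
      refine Finset.sum_congr rfl fun k _ => ?_
      rw [show x * (Ac (m + 1) n k * He (m + 1 + n - 2 * k) x)
          = Ac (m + 1) n k * (x * He (m + 1 + n - 2 * k) x) from by ring,
        He_X_mul (m + 1 + n - 2 * k) x]
      ring
    rw [hL1, Finset.sum_add_distrib]
    have hS1 : ∑ k ∈ Finset.range (m + 2), Ac (m + 1) n k * He (m + 1 + n - 2 * k + 1) x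
        = (∑ k ∈ Finset.range (m + 2), Ac (m + 1) n (k + 1) * He (m + n - 2 * k) x)
          + He (m + 2 + n) x := by
      rw [Finset.sum_range_succ'
        (fun k => Ac (m + 1) n k * He (m + 1 + n - 2 * k + 1) x) (m + 1)]
      congr 1
      · rw [Finset.sum_range_succ (fun k => Ac (m + 1) n (k + 1) * He (m + n - 2 * k) x) (m + 1)]
        rw [Ac_eq_zero_left n (by omega : m + 1 < m + 2), zero_mul, add_zero]
        refine Finset.sum_congr rfl fun k hk => ?_
        have hk' : k < m + 1 := Finset.mem_range.1 hk
        by_cases h : 2 * (k + 1) ≤ m + 1 + n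
        · have e : m + 1 + n - 2 * (k + 1) + 1 = m + n - 2 * k := by omega
          rw [e]
        · have hz : Ac (m + 1) n (k + 1) = 0 := Ac_eq_zero_right (m + 1) (by omega)
          rw [hz, zero_mul, zero_mul]
      · rw [Ac_zero, one_mul]
        congr 1
        omega
    have hS2 : ∑ k ∈ Finset.range (m + 2),
          Ac (m + 1) n k * ((m + 1 + n - 2 * k : ℕ) : ℝ) * He (m + 1 + n - 2 * k - 1) x
        = ∑ k ∈ Finset.range (m + 2),
            Ac (m + 1) n k * ((m + 1 + n - 2 * k : ℕ) : ℝ) * He (m + n - 2 * k) x := by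
      refine Finset.sum_congr rfl fun k _ => ?_
      have e : m + 1 + n - 2 * k - 1 = m + n - 2 * k := by omega
      rw [e]
    have hS3 : ((m : ℝ) + 1) * (∑ k ∈ Finset.range (m + 1), Ac m n k * He (m + n - 2 * k) x)
        = ∑ k ∈ Finset.range (m + 2), ((m : ℝ) + 1) * (Ac m n k * He (m + n - 2 * k) x) := by
      rw [Finset.sum_range_succ (fun k => ((m : ℝ) + 1) * (Ac m n k * He (m + n - 2 * k) x)) (m + 1)]
      rw [Ac_eq_zero_left n (by omega : m < m + 1), zero_mul, mul_zero, add_zero, Finset.mul_sum]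
    have hT : ∑ k ∈ Finset.range (m + 2 + 1), Ac (m + 2) n k * He (m + 2 + n - 2 * k) x
        = (∑ k ∈ Finset.range (m + 2),
            (Ac (m + 1) n (k + 1) * He (m + n - 2 * k) x
              + Ac (m + 1) n k * ((m + 1 + n - 2 * k : ℕ) : ℝ) * He (m + n - 2 * k) x
              - ((m : ℝ) + 1) * (Ac m n k * He (m + n - 2 * k) x)))
          + He (m + 2 + n) x := by
      rw [Finset.sum_range_succ' (fun k => Ac (m + 2) n k * He (m + 2 + n - 2 * k) x) (m + 2)]
      congr 1
      · refine Finset.sum_congr rfl fun k _ => ?_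
        have e : m + 2 + n - 2 * (k + 1) = m + n - 2 * k := by omega
        rw [e, He_key m n k]
        ring
      · rw [Ac_zero, one_mul]
        norm_num
    rw [hS1, hS2, hS3, hT, Finset.sum_sub_distrib, Finset.sum_add_distrib]
    ring

theorem hermite_square_expansion (n : ℕ) (x : ℝ) :
    (He n x) ^ 2 =
      ((Nat.factorial n : ℝ)) ^ 2 *
        ∑ i ∈ Finset.range (n + 1),
          He (2 * i) x / (((Nat.factorial i : ℝ)) ^ 2 * (Nat.factorial (n - i) : ℝ)) := by
  rw [sq, He_mul x n n,
    ← Finset.sum_range_reflect (fun k => Ac n n k * He (n + n - 2 * k) x) (n + 1),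
    Finset.mul_sum]
  refine Finset.sum_congr rfl fun i hi => ?_
  have hi' : i ≤ n := by have := Finset.mem_range.1 hi; omega
  have e0 : n + 1 - 1 - i = n - i := by omega
  have e1 : n + n - 2 * (n - i) = 2 * i := by omega
  have e2 : n.choose (n - i) = n.choose i := Nat.choose_symm hi'
  simp only [e0, e1]
  unfold Ac
  rw [e2]
  have hc : (n.choose i : ℝ) * (i.factorial : ℝ) * ((n - i).factorial : ℝ)
      = (n.factorial : ℝ) := by
    exact_mod_cast congrArg (Nat.cast (R := ℝ)) (Nat.choose_mul_factorial_mul_factorial hi')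
  have f1 : (i.factorial : ℝ) ≠ 0 := Nat.cast_ne_zero.2 (Nat.factorial_ne_zero _)
  have f2 : ((n - i).factorial : ℝ) ≠ 0 := Nat.cast_ne_zero.2 (Nat.factorial_ne_zero _)
  push_cast
  field_simp
  linear_combination (((n.choose i : ℝ) * (i.factorial : ℝ) * ((n - i).factorial : ℝ)
    + (n.factorial : ℝ)) * He (2 * i) x) * hc
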